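/- Let t be a positive integer and for each i ∈ {1,…,t} let F_i be a finite field with q_i elements and m_i a positive integer. Let R = ∏_{i=1}^{t} Matrix (Fin m_i) (Fin m_i) F_i be the product ring. Define ω : R → ℝ by ω(A_1,…,A_t) = 1 − ∏_{i=1}^{t} ( (−1)^(r_i) · q_i^(r_i(r_i−1)/2) / ∏_{l=0}^{r_i−1} (q_i^(m_i) − q_i^l) ), where r_i = rank(A_i). Then ω is a normalized homogeneous weight on R. -/

import Mathlib

/-- The principal left ideal generated by `x`, as a set: `{r * x : r ∈ R}`. -/
def leftOrbit {R : Type*} [Ring R] (x : R) : Set R := {z | ∃ r : R, z = r * x}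

/-- `ω` is a normalized homogeneous weight on the finite ring `R`. -/
def IsNormHomWeight {R : Type*} [Ring R] [Finite R] (ω : R → ℝ) : Prop :=
  ω 0 = 0 ∧
  (∀ x y : R, leftOrbit x = leftOrbit y → ω x = ω y) ∧
  (∀ x : R, x ≠ 0 →
    ∑ y ∈ (Set.toFinite (leftOrbit x)).toFinset, ω y
      = ((Set.toFinite (leftOrbit x)).toFinset.card : ℝ))

open Module Submodule LinearMap

/-- The "mu over number of surjections" function appearing in the homogeneous weight. -/
noncomputable def homf (q m r : ℕ) : ℝ :=
  (-1 : ℝ) ^ r * (q : ℝ) ^ (r * (r - 1) / 2) /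
    ∏ l ∈ Finset.range r, ((q : ℝ) ^ m - (q : ℝ) ^ l)

lemma homf_exp_succ (r : ℕ) : (r + 1) * r / 2 = r * (r - 1) / 2 + r := by
  cases r with
  | zero => rfl
  | succ s =>
    show (s + 2) * (s + 1) / 2 = (s + 1) * s / 2 + (s + 1)
    have h : (s + 2) * (s + 1) = (s + 1) * s + (s + 1) * 2 := by ring
    rw [h, Nat.add_mul_div_right _ _ (by norm_num : 0 < 2)]

lemma homf_denom_ne_zero {q m r : ℕ} (hq : 2 ≤ q) (hrm : r ≤ m) :
    (∏ l ∈ Finset.range r, ((q : ℝ) ^ m - (q : ℝ) ^ l)) ≠ 0 := by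
  rw [Finset.prod_ne_zero_iff]
  intro l hl
  rw [Finset.mem_range] at hl
  have h : (q : ℕ) ^ l < q ^ m := Nat.pow_lt_pow_right (by omega) (by omega)
  have h' : ((q : ℝ)) ^ l < (q : ℝ) ^ m := by exact_mod_cast h
  exact sub_ne_zero.2 (ne_of_gt h')

lemma homf_step {q m r : ℕ} (hq : 2 ≤ q) (hrm : r < m) :
    (q : ℝ) ^ r * homf q m r + ((q : ℝ) ^ m - (q : ℝ) ^ r) * homf q m (r + 1) = 0 := by
  have hD : (∏ l ∈ Finset.range r, ((q : ℝ) ^ m - (q : ℝ) ^ l)) ≠ 0 :=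
    homf_denom_ne_zero hq (le_of_lt hrm)
  have hR : ((q : ℝ) ^ m - (q : ℝ) ^ r) ≠ 0 := by
    have h : (q : ℕ) ^ r < q ^ m := Nat.pow_lt_pow_right (by omega) hrm
    have h' : ((q : ℝ)) ^ r < (q : ℝ) ^ m := by exact_mod_cast h
    exact sub_ne_zero.2 (ne_of_gt h')
  unfold homf
  rw [Finset.prod_range_succ, Nat.add_sub_cancel, homf_exp_succ, pow_add, pow_succ]
  field_simp
  ring

/-- Factoring a linear map through a surjection whose kernel is small enough. -/
lemma exists_comp_eq {K V W U : Type*} [Field K] [AddCommGroup V] [Module K V]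
    [AddCommGroup W] [Module K W] [AddCommGroup U] [Module K U]
    (g : V →ₗ[K] W) (f : V →ₗ[K] U) (hg : Function.Surjective g)
    (hker : LinearMap.ker g ≤ LinearMap.ker f) :
    ∃ h : W →ₗ[K] U, h ∘ₗ g = f := by
  obtain ⟨s, hs⟩ := g.exists_rightInverse_of_surjective (LinearMap.range_eq_top.2 hg)
  refine ⟨f ∘ₗ s, ?_⟩
  ext x
  have h1 : g (s (g x)) = g x := by
    have := LinearMap.ext_iff.1 hs (g x)
    simpa using this
  have h2 : s (g x) - x ∈ LinearMap.ker g := by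
    rw [LinearMap.mem_ker, map_sub, h1, sub_self]
  have h3 := hker h2
  rw [LinearMap.mem_ker, map_sub, sub_eq_zero] at h3
  simpa using h3

/-- The left orbit of a square matrix over a field consists exactly of the matrices whose
kernel contains the kernel of the given matrix. -/
lemma leftOrbit_matrix_eq {F : Type*} [Field F] {m : ℕ}
    (A : Matrix (Fin m) (Fin m) F) :
    leftOrbit A = {B | LinearMap.ker A.mulVecLin ≤ LinearMap.ker B.mulVecLin} := by
  ext B
  constructor
  · rintro ⟨C, rfl⟩
    intro v hv
    rw [LinearMap.mem_ker] at hv ⊢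
    rw [Matrix.mulVecLin_mul, LinearMap.comp_apply, hv, map_zero]
  · intro hB
    obtain ⟨h, hh⟩ := exists_comp_eq A.mulVecLin.rangeRestrict B.mulVecLin
      A.mulVecLin.surjective_rangeRestrict
      (by rw [LinearMap.ker_rangeRestrict]; exact hB)
    obtain ⟨g, hg⟩ := h.exists_extend
    refine ⟨LinearMap.toMatrix' g, ?_⟩
    have hcomp : g ∘ₗ A.mulVecLin = B.mulVecLin := by
      rw [← hh, ← hg]
      exact LinearMap.ext fun v => rfl
    have := congrArg LinearMap.toMatrix' hcomp
    rw [LinearMap.toMatrix'_comp] at this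
    have hA' : LinearMap.toMatrix' A.mulVecLin = A := LinearMap.toMatrix'_toLin' A
    have hB' : LinearMap.toMatrix' B.mulVecLin = B := LinearMap.toMatrix'_toLin' B
    rw [hA', hB'] at this
    exact this.symm

lemma sum_homf {F : Type*} [Field F] [Fintype F] {m k : ℕ} (hk : 1 ≤ k) (hkm : k ≤ m) :
    ∑ v : Fin k → (Fin m → F),
      homf (Fintype.card F) m (finrank F (span F (Set.range v))) = 0 := by
  classical
  obtain ⟨j, rfl⟩ : ∃ j, k = j + 1 := ⟨k - 1, by omega⟩
  rw [← Equiv.sum_comp (Fin.consEquiv fun _ : Fin (j + 1) => (Fin m → F))]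
  rw [Fintype.sum_prod_type_right]
  apply Finset.sum_eq_zero
  intro w _
  have hq2 : 2 ≤ Fintype.card F := Fintype.one_lt_card
  set W := span F (Set.range w) with hWdef
  set r := finrank F W with hrdef
  have hrj : r ≤ j := by
    rw [hrdef, hWdef]
    simpa [Set.finrank] using finrank_range_le_card (R := F) w
  have hrm : r < m := lt_of_le_of_lt hrj (by omega)
  have hpoint : ∀ x : Fin m → F,
      finrank F (span F (Set.range (Fin.cons x w : Fin (j + 1) → Fin m → F)))
        = if x ∈ W then r else r + 1 := by
    intro x
    rw [Fin.range_cons, Submodule.span_insert, ← hWdef]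
    by_cases hx : x ∈ W
    · rw [if_pos hx,
        show (span F {x}) ⊔ W = W from
          sup_eq_right.2 ((Submodule.span_singleton_le_iff_mem x W).2 hx)]
    · rw [if_neg hx]
      have hx0 : x ≠ 0 := fun h => hx (h ▸ W.zero_mem)
      have hdisj : span F {x} ⊓ W = ⊥ := by
        rw [Submodule.eq_bot_iff]
        rintro y ⟨hy1, hy2⟩
        obtain ⟨c, rfl⟩ := Submodule.mem_span_singleton.1 hy1
        rcases eq_or_ne c 0 with rfl | hc
        · simp
        · exfalso
          apply hx
          have := W.smul_mem c⁻¹ hy2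
          rwa [smul_smul, inv_mul_cancel₀ hc, one_smul] at this
      have hsum := Submodule.finrank_sup_add_finrank_inf_eq (span F {x}) W
      rw [hdisj, finrank_bot, add_zero, finrank_span_singleton hx0] at hsum
      omega
  have hsplit : ∀ x : Fin m → F,
      homf (Fintype.card F) m
        (finrank F (span F (Set.range ((Fin.consEquiv fun _ : Fin (j + 1) => (Fin m → F)) (x, w)))))
        = if x ∈ W then homf (Fintype.card F) m r else homf (Fintype.card F) m (r + 1) := by
    intro x
    have : (Fin.consEquiv fun _ : Fin (j + 1) => (Fin m → F)) (x, w)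
        = (Fin.cons x w : Fin (j + 1) → Fin m → F) := rfl
    rw [this, hpoint x, apply_ite (homf (Fintype.card F) m)]
  rw [Finset.sum_congr rfl fun x _ => hsplit x]
  rw [Finset.sum_ite, Finset.sum_const, Finset.sum_const]
  have hcW : (Finset.univ.filter (· ∈ W)).card = Fintype.card F ^ r := by
    rw [← Fintype.card_subtype]
    rw [card_eq_pow_finrank (K := F) (V := {x : Fin m → F // x ∈ W})]
  have hcV : Fintype.card (Fin m → F) = Fintype.card F ^ m := by
    simp [Fintype.card_fun]
  have hcWc : (Finset.univ.filter (fun x => ¬ x ∈ W)).card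
      = Fintype.card F ^ m - Fintype.card F ^ r := by
    have := Finset.card_filter_add_card_filter_not
      (s := (Finset.univ : Finset (Fin m → F))) (p := (· ∈ W))
    rw [Finset.card_univ, hcV] at this
    omega
  rw [hcW, hcWc, nsmul_eq_mul, nsmul_eq_mul]
  have hle : Fintype.card F ^ r ≤ Fintype.card F ^ m :=
    Nat.pow_le_pow_right (by omega) (le_of_lt hrm)
  push_cast [Nat.cast_sub hle]
  exact homf_step hq2 hrm

lemma orbit_sum_homf_eq_zero {F : Type*} [Field F] [Fintype F] {m : ℕ}
    (A : Matrix (Fin m) (Fin m) F) (hA : A ≠ 0) :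
    ∑ B ∈ (Set.toFinite (leftOrbit A)).toFinset, homf (Fintype.card F) m B.rank = 0 := by
  classical
  set k := A.rank with hk
  have hk1 : 1 ≤ k := by
    rcases Nat.eq_zero_or_pos k with h0 | h
    · exfalso
      apply hA
      have h1 : finrank F (LinearMap.range A.mulVecLin) = 0 := h0
      rw [Submodule.finrank_eq_zero] at h1
      rw [LinearMap.range_eq_bot] at h1
      have h2 := congrArg LinearMap.toMatrix' h1
      rwa [show LinearMap.toMatrix' A.mulVecLin = A from LinearMap.toMatrix'_toLin' A,
        map_zero] at h2
    · exact h
  have hkm : k ≤ m := A.rank_le_width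
  have hfr : finrank F (LinearMap.range A.mulVecLin) = k := rfl
  obtain ⟨c⟩ : Nonempty ((LinearMap.range A.mulVecLin) ≃ₗ[F] (Fin k → F)) :=
    FiniteDimensional.nonempty_linearEquiv_of_finrank_eq
      (by rw [hfr, Module.finrank_fin_fun])
  set π : (Fin m → F) →ₗ[F] (Fin k → F) :=
    c.toLinearMap ∘ₗ A.mulVecLin.rangeRestrict with hπ
  have hπsurj : Function.Surjective π :=
    c.surjective.comp A.mulVecLin.surjective_rangeRestrict
  have hπker : LinearMap.ker π = LinearMap.ker A.mulVecLin := by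
    rw [hπ, LinearMap.ker_comp, LinearEquiv.ker, Submodule.comap_bot,
      LinearMap.ker_rangeRestrict]
  set b := Pi.basisFun F (Fin k) with hb
  set Ψ : (Fin k → (Fin m → F)) → Matrix (Fin m) (Fin m) F :=
    fun v => LinearMap.toMatrix' ((b.constr F v) ∘ₗ π) with hΨ
  have hΨlin : ∀ v, (Ψ v).mulVecLin = (b.constr F v) ∘ₗ π :=
    fun v => Matrix.toLin'_toMatrix' _
  have hmem : ∀ v, Ψ v ∈ (Set.toFinite (leftOrbit A)).toFinset := by
    intro v
    rw [Set.Finite.mem_toFinset, leftOrbit_matrix_eq]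
    intro x hx
    rw [LinearMap.mem_ker, hΨlin v, LinearMap.comp_apply]
    have : π x = 0 := by rw [← LinearMap.mem_ker, hπker]; exact hx
    rw [this, map_zero]
  have hrank : ∀ v, (Ψ v).rank = finrank F (span F (Set.range v)) := by
    intro v
    rw [Matrix.rank, hΨlin v,
      LinearMap.range_comp_of_range_eq_top _ (LinearMap.range_eq_top.2 hπsurj),
      b.constr_range]
  have hinj : ∀ v v', Ψ v = Ψ v' → v = v' := by
    intro v v' hvv
    have h1 : (b.constr F v) ∘ₗ π = (b.constr F v') ∘ₗ π := by
      have := congrArg Matrix.toLin' hvv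
      rwa [hΨ, Matrix.toLin'_toMatrix', Matrix.toLin'_toMatrix'] at this
    have h2 : b.constr F v = b.constr F v' := by
      apply LinearMap.ext
      intro y
      obtain ⟨u, rfl⟩ := hπsurj y
      exact LinearMap.ext_iff.1 h1 u
    funext i
    rw [← b.constr_basis F v i, ← b.constr_basis F v' i, h2]
  have hsurj : ∀ B ∈ (Set.toFinite (leftOrbit A)).toFinset, ∃ v, Ψ v = B := by
    intro B hB
    rw [Set.Finite.mem_toFinset, leftOrbit_matrix_eq] at hB
    obtain ⟨δ, hδ⟩ := exists_comp_eq π B.mulVecLin hπsurj (by rw [hπker]; exact hB)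
    refine ⟨fun i => δ (b i), ?_⟩
    have h1 : b.constr F (fun i => δ (b i)) = δ := b.constr_self F δ
    rw [hΨ]
    simp only
    rw [h1, hδ]
    exact LinearMap.toMatrix'_toLin' B
  have hbij := Finset.sum_bij (s := (Finset.univ : Finset (Fin k → (Fin m → F))))
    (t := (Set.toFinite (leftOrbit A)).toFinset)
    (i := fun v _ => Ψ v)
    (fun v hv => hmem v)
    (fun v hv v' hv' h => hinj v v' h)
    (fun B hB => ⟨_, Finset.mem_univ _, (hsurj B hB).choose_spec⟩)
    (g := fun B => homf (Fintype.card F) m B.rank)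
    (f := fun v => homf (Fintype.card F) m (finrank F (span F (Set.range v))))
    (fun v hv => (congrArg (homf (Fintype.card F) m) (hrank v)).symm)
  rw [← hbij]
  exact sum_homf hk1 hkm

theorem homogeneous_weight_product_of_matrix_rings
    (t : ℕ) (ht : 0 < t) (mdim : Fin t → ℕ) (hm : ∀ i, 0 < mdim i)
    (F : Fin t → Type*) [∀ i, Field (F i)] [∀ i, Fintype (F i)]
    (q : Fin t → ℕ) (hq : ∀ i, Fintype.card (F i) = q i)
    (ω : (∀ i, Matrix (Fin (mdim i)) (Fin (mdim i)) (F i)) → ℝ)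
    (hω : ∀ A : ∀ i, Matrix (Fin (mdim i)) (Fin (mdim i)) (F i),
      ω A = 1 - ∏ i : Fin t,
        ((-1 : ℝ) ^ (A i).rank * (q i : ℝ) ^ ((A i).rank * ((A i).rank - 1) / 2)
          / ∏ l ∈ Finset.range (A i).rank, ((q i : ℝ) ^ (mdim i) - (q i : ℝ) ^ l))) :
    IsNormHomWeight ω := by
  classical
  refine ⟨?_, ?_, ?_⟩
  · rw [hω 0]
    have h0 : ∀ i : Fin t,
        ((0 : ∀ i, Matrix (Fin (mdim i)) (Fin (mdim i)) (F i)) i).rank = 0 :=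
      fun i => Matrix.rank_zero
    simp [h0]
  · intro x y h
    have hy : y ∈ leftOrbit x := by rw [h]; exact ⟨1, (one_mul y).symm⟩
    have hx : x ∈ leftOrbit y := by rw [← h]; exact ⟨1, (one_mul x).symm⟩
    obtain ⟨r, hr⟩ := hy
    obtain ⟨s, hs⟩ := hx
    have hxy : ∀ i, (y i).rank = (x i).rank := by
      intro i
      refine le_antisymm ?_ ?_
      · have : y i = r i * x i := by rw [hr]; rfl
        rw [this]; exact Matrix.rank_mul_le_right (r i) (x i)
      · have : x i = s i * y i := by rw [hs]; rfl
        rw [this]; exact Matrix.rank_mul_le_right (s i) (y i)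
    rw [hω x, hω y]
    congr 1
    exact Finset.prod_congr rfl fun i _ => by rw [hxy i]
  · intro x hx
    have hOeq : (Set.toFinite (leftOrbit x)).toFinset
        = Fintype.piFinset (fun i => (Set.toFinite (leftOrbit (x i))).toFinset) := by
      ext z
      simp only [Set.Finite.mem_toFinset, Fintype.mem_piFinset]
      constructor
      · rintro ⟨r, rfl⟩ i
        exact ⟨r i, rfl⟩
      · intro h
        choose r hr using h
        exact ⟨r, funext hr⟩
    have key : ∑ y ∈ (Set.toFinite (leftOrbit x)).toFinset,
        ∏ i, homf (q i) (mdim i) ((y i).rank) = 0 := by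
      have hfac := Finset.prod_univ_sum
        (fun i => (Set.toFinite (leftOrbit (x i))).toFinset)
        (fun i B => homf (q i) (mdim i) B.rank)
      rw [hOeq, ← hfac]
      obtain ⟨j, hj⟩ : ∃ j, x j ≠ 0 := by
        by_contra hcon
        push_neg at hcon
        exact hx (funext hcon)
      apply Finset.prod_eq_zero (Finset.mem_univ j)
      rw [← hq j]
      exact orbit_sum_homf_eq_zero (x j) hj
    calc ∑ y ∈ (Set.toFinite (leftOrbit x)).toFinset, ω y
        = ∑ y ∈ (Set.toFinite (leftOrbit x)).toFinset,
            (1 - ∏ i, homf (q i) (mdim i) ((y i).rank)) :=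
          Finset.sum_congr rfl fun y _ => hω y
      _ = ∑ y ∈ (Set.toFinite (leftOrbit x)).toFinset, (1 : ℝ)
            - ∑ y ∈ (Set.toFinite (leftOrbit x)).toFinset,
                ∏ i, homf (q i) (mdim i) ((y i).rank) := Finset.sum_sub_distrib _ _
      _ = ((Set.toFinite (leftOrbit x)).toFinset.card : ℝ) := by
          rw [key, Finset.sum_const, nsmul_eq_mul, mul_one, sub_zero]
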